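/- Let F be holomorphic on the open disk of radius |z| + ‖ξ‖∞ with nonnegative Taylor coefficients c_k at 0 and suppose c_k(φ∘r_{exp ξ}) ≤ Σ_ℓ ((k+ℓ)!/(k!ℓ!)) c_{k+ℓ}(φ) ‖ξ‖∞^ℓ. Then the translation estimate holds: |M_{φ∘r_{exp ξ}}(z)| ≤ M_φ(|z| + ‖ξ‖∞); in particular for a power series M(z)=Σ c_k z^k with c_k ≥ 0 convergent at radius r = |z|+s, Σ_ℓ (s^ℓ/ℓ!) M^{(ℓ)}(|z|) = M(|z|+s). -/

import Mathlib

open Finset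
open scoped ENNReal

/-- Translation estimate for Lie-Taylor majorants. Let `c k = c_k(φ)` be the
(nonnegative) majorant coefficients of `φ`, summable at radius `a + s`
(`a = |z|`, `s = ‖ξ‖_∞`), and let `d k = c_k(φ ∘ r_{exp ξ})` be nonnegative
coefficients satisfying `d_k ≤ Σ_ℓ ((k+ℓ)!/(k!ℓ!)) c_{k+ℓ} s^ℓ`. Then
`M_{φ∘r_{exp ξ}}(a) ≤ M_φ(a + s)`, and the power series identity
`Σ_ℓ (s^ℓ/ℓ!) M^{(ℓ)}(a) = M(a + s)` holds, where
`M^{(ℓ)}(a) = Σ_k ((k+ℓ)!/k!) c_{k+ℓ} a^k` is the `ℓ`-th derivative. -/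
theorem translation_majorant_estimate (c d : ℕ → ℝ)
    (hc : ∀ k, 0 ≤ c k) (hd0 : ∀ k, 0 ≤ d k)
    (a s : ℝ) (ha : 0 ≤ a) (hs : 0 ≤ s)
    (hsum : Summable fun k : ℕ => c k * (a + s) ^ k)
    (hd : ∀ k : ℕ, d k ≤
      ∑' ℓ : ℕ, ((k + ℓ).factorial : ℝ) / ((k.factorial : ℝ) * (ℓ.factorial : ℝ)) *
        c (k + ℓ) * s ^ ℓ) :
    (∑' k : ℕ, d k * a ^ k ≤ ∑' k : ℕ, c k * (a + s) ^ k) ∧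
    (∑' ℓ : ℕ, s ^ ℓ / (ℓ.factorial : ℝ) *
        ∑' k : ℕ, (((k + ℓ).factorial : ℝ) / (k.factorial : ℝ)) * c (k + ℓ) * a ^ k =
      ∑' k : ℕ, c k * (a + s) ^ k) := by
  classical
  set T : ℝ := ∑' k : ℕ, c k * (a + s) ^ k with hT
  set g : ℕ × ℕ → ℝ := fun p =>
    ((p.1 + p.2).factorial : ℝ) / ((p.1.factorial : ℝ) * (p.2.factorial : ℝ)) *
      c (p.1 + p.2) * s ^ p.2 * a ^ p.1 with hgdef
  have hgnn : ∀ p, 0 ≤ g p := by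
    intro p
    apply mul_nonneg
    apply mul_nonneg
    apply mul_nonneg
    · positivity
    · exact hc _
    · exact pow_nonneg hs _
    · exact pow_nonneg ha _
  set G : ℕ × ℕ → ℝ≥0∞ := fun p => ENNReal.ofReal (g p) with hGdef
  have hterm_nn : ∀ n : ℕ, 0 ≤ c n * (a + s) ^ n := fun n =>
    mul_nonneg (hc n) (pow_nonneg (by linarith) n)
  have hTnn : 0 ≤ T := tsum_nonneg hterm_nn
  -- binomial theorem along antidiagonals
  have hdiag : ∀ n : ℕ, ∑ p ∈ Finset.HasAntidiagonal.antidiagonal n, g p = c n * (a + s) ^ n := by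
    intro n
    rw [Finset.Nat.sum_antidiagonal_eq_sum_range_succ_mk g n, add_pow, Finset.mul_sum]
    apply Finset.sum_congr rfl
    intro k hk
    have hkn : k ≤ n := Finset.mem_range_succ_iff.mp hk
    have hkk : k + (n - k) = n := by omega
    simp only [hgdef, hkk]
    rw [Nat.cast_choose ℝ hkn]
    ring
  -- total sum of G
  have hGtot : ∑' p : ℕ × ℕ, G p = ENNReal.ofReal T := by
    calc ∑' p : ℕ × ℕ, G p
        = ∑' x : (Σ n : ℕ, Finset.HasAntidiagonal.antidiagonal n),
            G (Finset.HasAntidiagonal.sigmaAntidiagonalEquivProd x) :=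
          (Equiv.tsum_eq Finset.HasAntidiagonal.sigmaAntidiagonalEquivProd G).symm
      _ = ∑' (n : ℕ) (x : Finset.HasAntidiagonal.antidiagonal n), G x :=
          ENNReal.tsum_sigma' _
      _ = ∑' n : ℕ, ENNReal.ofReal (c n * (a + s) ^ n) := by
          refine tsum_congr fun n => ?_
          rw [Finset.tsum_subtype (Finset.HasAntidiagonal.antidiagonal n) G,
            ← ENNReal.ofReal_sum_of_nonneg fun p _ => hgnn p, hdiag n]
      _ = ENNReal.ofReal T :=
          (ENNReal.ofReal_tsum_of_nonneg hterm_nn hsum).symm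
  have hGne : ∑' p : ℕ × ℕ, G p ≠ ⊤ := hGtot ▸ ENNReal.ofReal_ne_top
  have hGprod : ∑' p : ℕ × ℕ, G p = ∑' (k : ℕ) (ℓ : ℕ), G (k, ℓ) := ENNReal.tsum_prod'
  -- row sums
  have hrow_ne : ∀ k : ℕ, ∑' ℓ : ℕ, G (k, ℓ) ≠ ⊤ := by
    intro k
    refine ne_top_of_le_ne_top (hGprod ▸ hGne) ?_
    exact ENNReal.le_tsum k
  have hrow_summable : ∀ k : ℕ, Summable fun ℓ : ℕ => g (k, ℓ) := by
    intro k
    refine (ENNReal.summable_toReal (hrow_ne k)).congr fun ℓ => ?_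
    exact ENNReal.toReal_ofReal (hgnn _)
  have hrow_ofReal : ∀ k : ℕ, ENNReal.ofReal (∑' ℓ : ℕ, g (k, ℓ)) = ∑' ℓ : ℕ, G (k, ℓ) :=
    fun k => ENNReal.ofReal_tsum_of_nonneg (fun ℓ => hgnn _) (hrow_summable k)
  set h : ℕ → ℝ := fun k => ∑' ℓ : ℕ, g (k, ℓ) with hhdef
  have hhnn : ∀ k, 0 ≤ h k := fun k => tsum_nonneg fun ℓ => hgnn _
  have hofh : ∑' k : ℕ, ENNReal.ofReal (h k) = ENNReal.ofReal T := by
    rw [show (fun k : ℕ => ENNReal.ofReal (h k)) = fun k => ∑' ℓ : ℕ, G (k, ℓ) from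
      funext fun k => hrow_ofReal k]
    rw [← hGprod, hGtot]
  have hh_summable : Summable h := by
    refine (ENNReal.summable_toReal (by rw [hofh]; exact ENNReal.ofReal_ne_top)).congr fun k => ?_
    exact ENNReal.toReal_ofReal (hhnn k)
  have hh_tsum : ∑' k : ℕ, h k = T := by
    have := ENNReal.ofReal_tsum_of_nonneg hhnn hh_summable
    rw [hofh] at this
    exact (ENNReal.ofReal_eq_ofReal_iff (tsum_nonneg hhnn) hTnn).mp this
  -- first conclusion
  have key : ∀ k : ℕ, d k * a ^ k ≤ h k := by
    intro k
    calc d k * a ^ k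
        ≤ (∑' ℓ : ℕ, ((k + ℓ).factorial : ℝ) / ((k.factorial : ℝ) * (ℓ.factorial : ℝ)) *
            c (k + ℓ) * s ^ ℓ) * a ^ k :=
          mul_le_mul_of_nonneg_right (hd k) (pow_nonneg ha k)
      _ = h k := by
          rw [hhdef, ← tsum_mul_right]
  have hda_summable : Summable fun k : ℕ => d k * a ^ k :=
    Summable.of_nonneg_of_le (fun k => mul_nonneg (hd0 k) (pow_nonneg ha k)) key hh_summable
  have concl1 : ∑' k : ℕ, d k * a ^ k ≤ T := by
    calc ∑' k : ℕ, d k * a ^ k ≤ ∑' k : ℕ, h k := Summable.tsum_le_tsum key hda_summable hh_summable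
      _ = T := hh_tsum
  -- column sums
  have hGprod' : ∑' p : ℕ × ℕ, G p = ∑' (ℓ : ℕ) (k : ℕ), G (k, ℓ) := by
    rw [hGprod]; exact ENNReal.tsum_comm
  have hcol_ne : ∀ ℓ : ℕ, ∑' k : ℕ, G (k, ℓ) ≠ ⊤ := by
    intro ℓ
    refine ne_top_of_le_ne_top (hGprod' ▸ hGne) ?_
    exact ENNReal.le_tsum ℓ
  have hcol_summable : ∀ ℓ : ℕ, Summable fun k : ℕ => g (k, ℓ) := by
    intro ℓ
    refine (ENNReal.summable_toReal (hcol_ne ℓ)).congr fun k => ?_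
    exact ENNReal.toReal_ofReal (hgnn _)
  set col : ℕ → ℝ := fun ℓ => ∑' k : ℕ, g (k, ℓ) with hcoldef
  have hcolnn : ∀ ℓ, 0 ≤ col ℓ := fun ℓ => tsum_nonneg fun k => hgnn _
  have hcol_ofReal : ∀ ℓ : ℕ, ENNReal.ofReal (col ℓ) = ∑' k : ℕ, G (k, ℓ) :=
    fun ℓ => ENNReal.ofReal_tsum_of_nonneg (fun k => hgnn _) (hcol_summable ℓ)
  have hofcol : ∑' ℓ : ℕ, ENNReal.ofReal (col ℓ) = ENNReal.ofReal T := by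
    rw [show (fun ℓ : ℕ => ENNReal.ofReal (col ℓ)) = fun ℓ => ∑' k : ℕ, G (k, ℓ) from
      funext fun ℓ => hcol_ofReal ℓ]
    rw [← hGprod', hGtot]
  have hcolsum : Summable col := by
    refine (ENNReal.summable_toReal (by rw [hofcol]; exact ENNReal.ofReal_ne_top)).congr
      fun ℓ => ?_
    exact ENNReal.toReal_ofReal (hcolnn ℓ)
  have hcol_tsum : ∑' ℓ : ℕ, col ℓ = T := by
    have := ENNReal.ofReal_tsum_of_nonneg hcolnn hcolsum
    rw [hofcol] at this
    exact (ENNReal.ofReal_eq_ofReal_iff (tsum_nonneg hcolnn) hTnn).mp this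
  -- second conclusion
  have concl2 : ∑' ℓ : ℕ, s ^ ℓ / (ℓ.factorial : ℝ) *
      ∑' k : ℕ, (((k + ℓ).factorial : ℝ) / (k.factorial : ℝ)) * c (k + ℓ) * a ^ k = T := by
    rw [← hcol_tsum]
    refine tsum_congr fun ℓ => ?_
    rw [hcoldef, ← tsum_mul_left]
    refine tsum_congr fun k => ?_
    simp only [hgdef]
    ring
  exact ⟨concl1, concl2⟩
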